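/- Let f : ℝ² → ℝ be a measurable, nonnegative, integrable joint probability density with marginals f_X and f_Y. Let ψ₁, ψ₂ : ℝ → ℝ be C¹ diffeomorphisms of ℝ with everywhere strictly positive derivatives. Define the transformed joint density g(u,v) = f(ψ₁⁻¹(u), ψ₂⁻¹(v)) · (ψ₁⁻¹)'(u) · (ψ₂⁻¹)'(v), with marginals g_U(u) = ∫ g(u,v) dv and g_V(v) = ∫ g(u,v) du. Then ∫∫ √(g(u,v) · g_U(u) · g_V(v)) du dv = ∫∫ √(f(x,y) · f_X(x) · f_Y(y)) dx dy, and consequently the Hellinger distance between g and g_U g_V equals the Hellinger distance between f and f_X f_Y; i.e., mutual dependence is invariant under strictly monotonic transformations of each variable. -/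

import Mathlib

open MeasureTheory

/-- Mutual dependence is invariant under strictly monotonic (C¹
diffeomorphism with strictly positive derivative) transformations of each
variable: if `(X,Y)` has density `f` and `g` is the density of
`(ψ₁(X), ψ₂(Y))`, then the Bhattacharyya coefficient and the Hellinger
distance between joint and product of marginals are equal for `f` and `g`. -/
lemma det_prodMap_aux (c d : ℝ) :
    (((ContinuousLinearMap.smulRight (1 : ℝ →L[ℝ] ℝ) c).prodMap
      (ContinuousLinearMap.smulRight (1 : ℝ →L[ℝ] ℝ) d)).det) = c * d := by
  show LinearMap.det _ = c * d
  rw [← LinearMap.det_toMatrix (Module.Basis.finTwoProd ℝ)]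
  have : (LinearMap.toMatrix (Module.Basis.finTwoProd ℝ) (Module.Basis.finTwoProd ℝ)
      (((ContinuousLinearMap.smulRight (1 : ℝ →L[ℝ] ℝ) c).prodMap
        (ContinuousLinearMap.smulRight (1 : ℝ →L[ℝ] ℝ) d)) : (ℝ × ℝ) →ₗ[ℝ] ℝ × ℝ))
      = !![c, 0; 0, d] := by
    ext i j
    fin_cases i <;> fin_cases j <;>
      simp [LinearMap.toMatrix_apply, Module.Basis.finTwoProd_zero, Module.Basis.finTwoProd_one,
        Module.Basis.coe_finTwoProd_repr]
  rw [this, Matrix.det_fin_two_of]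
  ring

lemma oneD_change {φ : ℝ → ℝ}
    (hd : ∀ u, HasDerivAt φ (deriv φ u) u) (hpos : ∀ u, 0 < deriv φ u)
    (hbij : Function.Bijective φ) (k : ℝ → ℝ) :
    ∫ u, deriv φ u * k (φ u) = ∫ x, k x := by
  have h := integral_image_eq_integral_abs_det_fderiv_smul (μ := volume) MeasurableSet.univ
      (f' := fun u => ContinuousLinearMap.smulRight (1 : ℝ →L[ℝ] ℝ) (deriv φ u))
      (fun x _ => (hd x).hasFDerivAt.hasFDerivWithinAt) hbij.injective.injOn k
  rw [Set.image_univ, hbij.surjective.range_eq, Measure.restrict_univ] at h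
  rw [h]
  congr 1; funext u
  rw [ContinuousLinearMap.smulRight_one_eq_toSpanSingleton, ContinuousLinearMap.det_toSpanSingleton, abs_of_pos (hpos u), smul_eq_mul]

lemma twoD_change {φ₁ φ₂ : ℝ → ℝ}
    (hd₁ : ∀ u, HasDerivAt φ₁ (deriv φ₁ u) u) (hpos₁ : ∀ u, 0 < deriv φ₁ u)
    (hbij₁ : Function.Bijective φ₁)
    (hd₂ : ∀ u, HasDerivAt φ₂ (deriv φ₂ u) u) (hpos₂ : ∀ u, 0 < deriv φ₂ u)
    (hbij₂ : Function.Bijective φ₂) (h : ℝ × ℝ → ℝ) :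
    ∫ p : ℝ × ℝ, deriv φ₁ p.1 * deriv φ₂ p.2 * h (φ₁ p.1, φ₂ p.2) = ∫ p : ℝ × ℝ, h p := by
  have key := integral_image_eq_integral_abs_det_fderiv_smul (μ := volume) MeasurableSet.univ
      (f := Prod.map φ₁ φ₂)
      (f' := fun p => (ContinuousLinearMap.smulRight (1 : ℝ →L[ℝ] ℝ) (deriv φ₁ p.1)).prodMap
        (ContinuousLinearMap.smulRight (1 : ℝ →L[ℝ] ℝ) (deriv φ₂ p.2)))
      (fun p _ => (HasFDerivAt.prodMap p (hd₁ p.1).hasFDerivAt (hd₂ p.2).hasFDerivAt).hasFDerivWithinAt)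
      (hbij₁.injective.prodMap hbij₂.injective).injOn h
  rw [Set.image_univ, Set.range_prodMap, hbij₁.surjective.range_eq, hbij₂.surjective.range_eq,
    Set.univ_prod_univ, Measure.restrict_univ] at key
  rw [key]
  congr 1; funext p
  rw [det_prodMap_aux, abs_of_pos (mul_pos (hpos₁ p.1) (hpos₂ p.2)), smul_eq_mul]
  rfl

lemma inverse_continuous {ψ φ : ℝ → ℝ} (hmono : StrictMono ψ)
    (hsurj : Function.Surjective ψ) (hright : Function.RightInverse φ ψ) :
    Continuous φ := by
  have hφ : φ = ((StrictMono.orderIsoOfSurjective ψ hmono hsurj).symm : ℝ → ℝ) := by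
    funext u
    apply hmono.injective
    rw [hright u]
    exact (StrictMono.orderIsoOfSurjective_self_symm_apply ψ hmono hsurj u).symm
  rw [hφ]
  exact OrderIso.continuous _

lemma inverse_hasDerivAt {ψ φ : ℝ → ℝ} (hψ : ContDiff ℝ 1 ψ)
    (hψ' : ∀ x, 0 < deriv ψ x) (hbij : Function.Bijective ψ)
    (hright : Function.RightInverse φ ψ) (u : ℝ) :
    HasDerivAt φ ((deriv ψ (φ u))⁻¹) u :=
  HasDerivAt.of_local_left_inverse
    (inverse_continuous (strictMono_of_deriv_pos hψ') hbij.surjective hright).continuousAt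
    ((hψ.differentiable one_ne_zero (φ u)).hasDerivAt) (hψ' _).ne'
    (Filter.Eventually.of_forall hright)

theorem mutual_dependence_invariant_monotone_transform
    (f : ℝ × ℝ → ℝ)
    (hf_meas : Measurable f) (hf_nonneg : ∀ p, 0 ≤ f p)
    (hf_int : Integrable f) (hf_one : ∫ p, f p = 1)
    (fX fY : ℝ → ℝ)
    (hfX : ∀ x, fX x = ∫ y, f (x, y))
    (hfY : ∀ y, fY y = ∫ x, f (x, y))
    (ψ₁ ψ₂ φ₁ φ₂ : ℝ → ℝ)
    (hψ₁ : ContDiff ℝ 1 ψ₁) (hψ₂ : ContDiff ℝ 1 ψ₂)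
    (hψ₁' : ∀ x, 0 < deriv ψ₁ x) (hψ₂' : ∀ x, 0 < deriv ψ₂ x)
    (hψ₁bij : Function.Bijective ψ₁) (hψ₂bij : Function.Bijective ψ₂)
    (hφ₁left : Function.LeftInverse φ₁ ψ₁) (hφ₁right : Function.RightInverse φ₁ ψ₁)
    (hφ₂left : Function.LeftInverse φ₂ ψ₂) (hφ₂right : Function.RightInverse φ₂ ψ₂)
    (g : ℝ × ℝ → ℝ)
    (hg : ∀ u v, g (u, v) = f (φ₁ u, φ₂ v) * deriv φ₁ u * deriv φ₂ v)
    (gU gV : ℝ → ℝ)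
    (hgU : ∀ u, gU u = ∫ v, g (u, v))
    (hgV : ∀ v, gV v = ∫ u, g (u, v)) :
    (∫ p : ℝ × ℝ, Real.sqrt (g p * gU p.1 * gV p.2)
        = ∫ p : ℝ × ℝ, Real.sqrt (f p * fX p.1 * fY p.2)) ∧
    Real.sqrt ((1 / 2) * ∫ p : ℝ × ℝ,
        (Real.sqrt (g p) - Real.sqrt (gU p.1 * gV p.2)) ^ 2)
      = Real.sqrt ((1 / 2) * ∫ p : ℝ × ℝ,
        (Real.sqrt (f p) - Real.sqrt (fX p.1 * fY p.2)) ^ 2) := by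
  -- derivatives of the inverses
  have hD₁ : ∀ u, HasDerivAt φ₁ ((deriv ψ₁ (φ₁ u))⁻¹) u :=
    inverse_hasDerivAt hψ₁ hψ₁' hψ₁bij hφ₁right
  have hD₂ : ∀ u, HasDerivAt φ₂ ((deriv ψ₂ (φ₂ u))⁻¹) u :=
    inverse_hasDerivAt hψ₂ hψ₂' hψ₂bij hφ₂right
  have hd₁ : ∀ u, HasDerivAt φ₁ (deriv φ₁ u) u := fun u => (hD₁ u).deriv ▸ hD₁ u
  have hd₂ : ∀ u, HasDerivAt φ₂ (deriv φ₂ u) u := fun u => (hD₂ u).deriv ▸ hD₂ u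
  have hpos₁ : ∀ u, 0 < deriv φ₁ u := fun u => by
    rw [(hD₁ u).deriv]; exact inv_pos.mpr (hψ₁' _)
  have hpos₂ : ∀ u, 0 < deriv φ₂ u := fun u => by
    rw [(hD₂ u).deriv]; exact inv_pos.mpr (hψ₂' _)
  have hbij₁ : Function.Bijective φ₁ :=
    ⟨Function.LeftInverse.injective hφ₁right, hφ₁left.surjective⟩
  have hbij₂ : Function.Bijective φ₂ :=
    ⟨Function.LeftInverse.injective hφ₂right, hφ₂left.surjective⟩
  -- marginals transform
  have hgU' : ∀ u, gU u = deriv φ₁ u * fX (φ₁ u) := by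
    intro u
    rw [hgU, hfX]
    calc ∫ v, g (u, v) = ∫ v, deriv φ₁ u * (deriv φ₂ v * f (φ₁ u, φ₂ v)) := by
          congr 1; funext v; rw [hg]; ring
      _ = deriv φ₁ u * ∫ v, deriv φ₂ v * f (φ₁ u, φ₂ v) := by
          rw [integral_const_mul]
      _ = deriv φ₁ u * ∫ y, f (φ₁ u, y) := by
          rw [oneD_change hd₂ hpos₂ hbij₂ (fun y => f (φ₁ u, y))]
  have hgV' : ∀ v, gV v = deriv φ₂ v * fY (φ₂ v) := by
    intro v
    rw [hgV, hfY]
    calc ∫ u, g (u, v) = ∫ u, deriv φ₂ v * (deriv φ₁ u * f (φ₁ u, φ₂ v)) := by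
          congr 1; funext u; rw [hg]; ring
      _ = deriv φ₂ v * ∫ u, deriv φ₁ u * f (φ₁ u, φ₂ v) := by
          rw [integral_const_mul]
      _ = deriv φ₂ v * ∫ x, f (x, φ₂ v) := by
          rw [oneD_change hd₁ hpos₁ hbij₁ (fun x => f (x, φ₂ v))]
  -- first conjunct
  have key1 : ∫ p : ℝ × ℝ, Real.sqrt (g p * gU p.1 * gV p.2)
      = ∫ p : ℝ × ℝ, Real.sqrt (f p * fX p.1 * fY p.2) := by
    rw [← twoD_change hd₁ hpos₁ hbij₁ hd₂ hpos₂ hbij₂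
      (fun p => Real.sqrt (f p * fX p.1 * fY p.2))]
    congr 1; funext p; obtain ⟨u, v⟩ := p
    show Real.sqrt (g (u, v) * gU u * gV v)
      = deriv φ₁ u * deriv φ₂ v * Real.sqrt (f (φ₁ u, φ₂ v) * fX (φ₁ u) * fY (φ₂ v))
    have hcd : (0:ℝ) < deriv φ₁ u * deriv φ₂ v := mul_pos (hpos₁ u) (hpos₂ v)
    have h1 : g (u, v) * gU u * gV v
        = (deriv φ₁ u * deriv φ₂ v) ^ 2 * (f (φ₁ u, φ₂ v) * fX (φ₁ u) * fY (φ₂ v)) := by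
      rw [hg, hgU', hgV']; ring
    rw [h1, Real.sqrt_mul (sq_nonneg _), Real.sqrt_sq hcd.le]
  -- second conjunct
  have key2 : ∫ p : ℝ × ℝ, (Real.sqrt (g p) - Real.sqrt (gU p.1 * gV p.2)) ^ 2
      = ∫ p : ℝ × ℝ, (Real.sqrt (f p) - Real.sqrt (fX p.1 * fY p.2)) ^ 2 := by
    rw [← twoD_change hd₁ hpos₁ hbij₁ hd₂ hpos₂ hbij₂
      (fun p => (Real.sqrt (f p) - Real.sqrt (fX p.1 * fY p.2)) ^ 2)]
    congr 1; funext p; obtain ⟨u, v⟩ := p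
    show (Real.sqrt (g (u, v)) - Real.sqrt (gU u * gV v)) ^ 2
      = deriv φ₁ u * deriv φ₂ v
        * (Real.sqrt (f (φ₁ u, φ₂ v)) - Real.sqrt (fX (φ₁ u) * fY (φ₂ v))) ^ 2
    have hcd : (0:ℝ) < deriv φ₁ u * deriv φ₂ v := mul_pos (hpos₁ u) (hpos₂ v)
    have h1 : g (u, v) = (deriv φ₁ u * deriv φ₂ v) * f (φ₁ u, φ₂ v) := by
      rw [hg]; ring
    have h2 : gU u * gV v = (deriv φ₁ u * deriv φ₂ v) * (fX (φ₁ u) * fY (φ₂ v)) := by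
      rw [hgU', hgV']; ring
    rw [h1, h2, Real.sqrt_mul hcd.le, Real.sqrt_mul hcd.le, ← mul_sub, mul_pow,
      Real.sq_sqrt hcd.le]
  exact ⟨key1, by rw [key2]⟩
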